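/- The full subcategory F of the arrow category Cat² determined by the functors that are injective on objects and fully faithful (full embeddings) is a reflective subcategory of Cat², and is therefore complete and cocomplete. -/

import Mathlib

open CategoryTheory

universe u

/-- The property of an object of the arrow category of `Cat` of being a full embedding:
a fully faithful functor which is injective on objects. -/
def IsFullEmbedding (X : Arrow Cat.{u, u}) : Prop :=
  (X.hom.toFunctor : ↥X.left ⥤ ↥X.right).Full ∧ (X.hom.toFunctor : ↥X.left ⥤ ↥X.right).Faithful ∧
    Function.Injective (X.hom.toFunctor : ↥X.left ⥤ ↥X.right).obj

/-- The category `F`: the full subcategory of the arrow category `Cat²` on the full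
embeddings. -/
abbrev FCat : Type (u + 1) := ObjectProperty.FullSubcategory IsFullEmbedding.{u}


/-! ## Auxiliary construction: colimits in `Cat` -/

namespace CatColim

variable {J : Type u} [Category.{u} J] (F : J ⥤ Cat.{u, u})

/-- Relation identifying objects along the functors of the diagram. -/
def objRel : (Σ j : J, (F.obj j : Type u)) → (Σ j : J, (F.obj j : Type u)) → Prop :=
  fun p q => ∃ f : p.1 ⟶ q.1, (F.map f).toFunctor.obj p.2 = q.2

def Obj : Type u := Quot (objRel F)

abbrev mkObj (j : J) (x : F.obj j) : Obj F := Quot.mk _ ⟨j, x⟩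

/-- Arrows of the generating quiver: a morphism in some category of the diagram. -/
structure Arr : Type u where
  j : J
  x : F.obj j
  y : F.obj j
  φ : x ⟶ y

instance quiv : Quiver.{u} (Obj F) where
  Hom a b := { t : Arr F // mkObj F t.j t.x = a ∧ mkObj F t.j t.y = b }

/-- The relation on the path category. -/
inductive pathRel : HomRel (Paths (Obj F))
  | id (j : J) (x : F.obj j) {a : Obj F} (h : mkObj F j x = a) :
      pathRel (Quiver.Hom.toPath ⟨⟨j, x, x, 𝟙 x⟩, h, h⟩) Quiver.Path.nil
  | comp (j : J) {x y z : F.obj j} (φ : x ⟶ y) (ψ : y ⟶ z) {a b : Obj F}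
      (h1 : mkObj F j x = a) (h2 : mkObj F j z = b) :
      pathRel (Quiver.Hom.toPath ⟨⟨j, x, z, φ ≫ ψ⟩, h1, h2⟩)
        ((Quiver.Hom.toPath (⟨⟨j, x, y, φ⟩, h1, rfl⟩ : a ⟶ mkObj F j y)).comp
          (Quiver.Hom.toPath (⟨⟨j, y, z, ψ⟩, rfl, h2⟩ : mkObj F j y ⟶ b)))
  | map {j k : J} (f : j ⟶ k) {x y : F.obj j} (φ : x ⟶ y) {a b : Obj F}
      (h1 : mkObj F j x = a) (h2 : mkObj F j y = b)
      (h1' : mkObj F k ((F.map f).toFunctor.obj x) = a) (h2' : mkObj F k ((F.map f).toFunctor.obj y) = b) :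
      pathRel (Quiver.Hom.toPath ⟨⟨j, x, y, φ⟩, h1, h2⟩)
        (Quiver.Hom.toPath ⟨⟨k, _, _, (F.map f).toFunctor.map φ⟩, h1', h2'⟩)

/-- The colimit category. -/
abbrev C : Type u := CategoryTheory.Quotient (pathRel F)

/-- Objects of the colimit category. -/
def mkC (a : Obj F) : C F := ⟨a⟩

/-- The class of a single generating arrow, with adjustable endpoints. -/
def sng (j : J) {x y : F.obj j} (φ : x ⟶ y) {a b : Obj F}
    (h1 : mkObj F j x = a) (h2 : mkObj F j y = b) : mkC F a ⟶ mkC F b :=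
  (Quotient.functor (pathRel F)).map (Quiver.Hom.toPath ⟨⟨j, x, y, φ⟩, h1, h2⟩)

lemma sng_conj (j : J) {x y : F.obj j} (φ : x ⟶ y) {a b a' b' : Obj F}
    (h1 : mkObj F j x = a) (h2 : mkObj F j y = b)
    (h1' : mkObj F j x = a') (h2' : mkObj F j y = b')
    (e1 : mkC F a' = mkC F a) (e2 : mkC F b = mkC F b') :
    eqToHom e1 ≫ sng F j φ h1 h2 ≫ eqToHom e2 = sng F j φ h1' h2' := by
  obtain rfl : a' = a := congrArg (Quotient.as (C := Paths (Obj F))) e1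
  obtain rfl : b = b' := congrArg (Quotient.as (C := Paths (Obj F))) e2
  simp only [eqToHom_refl, Category.id_comp, Category.comp_id]

lemma sng_map {j k : J} (f : j ⟶ k) {x y : F.obj j} (φ : x ⟶ y) {a b : Obj F}
    (h1 : mkObj F j x = a) (h2 : mkObj F j y = b)
    (h1' : mkObj F k ((F.map f).toFunctor.obj x) = a) (h2' : mkObj F k ((F.map f).toFunctor.obj y) = b) :
    sng F j φ h1 h2 = sng F k ((F.map f).toFunctor.map φ) h1' h2' :=
  CategoryTheory.Quotient.sound _ (pathRel.map f φ h1 h2 h1' h2')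

/-- The component functors of the colimit cocone. -/
def ι (j : J) : (F.obj j : Type u) ⥤ C F where
  obj x := mkC F (mkObj F j x)
  map φ := sng F j φ rfl rfl
  map_id x := by
    have := CategoryTheory.Quotient.sound (pathRel F) (pathRel.id j x rfl)
    exact this.trans ((Quotient.functor (pathRel F)).map_id _)
  map_comp {x y z} φ ψ := by
    have := CategoryTheory.Quotient.sound (pathRel F) (pathRel.comp j φ ψ rfl rfl)
    exact this.trans ((Quotient.functor (pathRel F)).map_comp _ _)

lemma obj_sound {j k : J} (f : j ⟶ k) (x : F.obj j) :
    mkObj F j x = mkObj F k ((F.map f).toFunctor.obj x) :=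
  Quot.sound ⟨f, rfl⟩

lemma ι_naturality {j k : J} (f : j ⟶ k) : (F.map f).toFunctor ⋙ ι F k = ι F j := by
  refine CategoryTheory.Functor.ext (fun x => (congrArg (mkC F) (obj_sound F f x)).symm) ?_
  intro x y φ
  show sng F k ((F.map f).toFunctor.map φ) rfl rfl = eqToHom _ ≫ sng F j φ rfl rfl ≫ eqToHom _
  exact (sng_map F f φ (obj_sound F f x) (obj_sound F f y) rfl rfl).symm.trans
    (sng_conj F j φ rfl rfl (obj_sound F f x) (obj_sound F f y) _ _).symm

end CatColim

namespace CatColim2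
open CatColim Limits
variable {J : Type u} [Category.{u} J] (F : J ⥤ Cat.{u, u})

/-- The colimit cocone. -/
def cocone : Cocone F where
  pt := Cat.of (C F)
  ι :=
    { app := fun j => ⟨ι F j⟩
      naturality := fun j k f => by
        change F.map f ≫ (⟨ι F k⟩ : F.obj k ⟶ Cat.of (C F)) = (⟨ι F j⟩ : F.obj j ⟶ Cat.of (C F)) ≫ 𝟙 (Cat.of (C F))
        rw [Category.comp_id]
        exact Cat.Hom.ext (ι_naturality F f) }

variable (s : Cocone F)

/-- The components of the cocone `s`, as functors into `s.pt`. -/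
def ιs (j : J) : (F.obj j : Type u) ⥤ (s.pt : Type u) := (s.ι.app j).toFunctor

lemma ιs_w {j k : J} (f : j ⟶ k) : (F.map f).toFunctor ⋙ ιs F s k = ιs F s j :=
  congrArg Cat.Hom.toFunctor (s.w f)

/-- Descent on objects. -/
abbrev descObj : Obj F → (s.pt : Type u) :=
  Quot.lift (fun p => (ιs F s p.1).obj p.2)
    (by
      rintro ⟨j, x⟩ ⟨k, y⟩ ⟨f, h⟩
      dsimp only at f h
      show (ιs F s j).obj x = (ιs F s k).obj y
      rw [← h]
      exact (Functor.congr_obj (ιs_w F s f) x).symm)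

/-- Descent as a prefunctor on the generating quiver. -/
abbrev descPre : (Obj F) ⥤q (s.pt : Type u) where
  obj := descObj F s
  map {a b} t :=
    eqToHom (congrArg (descObj F s) t.2.1).symm ≫ (ιs F s t.1.j).map t.1.φ ≫
      eqToHom (congrArg (descObj F s) t.2.2)

/-- Descent functor out of the colimit. -/
def desc : C F ⥤ (s.pt : Type u) :=
  CategoryTheory.Quotient.lift _ (Paths.lift (descPre F s)) (by
    rintro X Y p q h
    induction h with
    | id j x h =>
      rw [Paths.lift_toPath, Paths.lift_nil]
      show eqToHom _ ≫ (ιs F s j).map (𝟙 x) ≫ eqToHom _ = 𝟙 _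
      simp
    | comp j φ ψ h1 h2 =>
      rename_i x y z a b
      show _ = (Paths.lift (descPre F s)).map ((Quiver.Path.nil.cons _).cons _)
      rw [Paths.lift_toPath, Paths.lift_cons, Paths.lift_cons, Paths.lift_nil]
      show eqToHom _ ≫ (ιs F s j).map (φ ≫ ψ) ≫ eqToHom _ =
        (𝟙 _ ≫ (eqToHom _ ≫ (ιs F s j).map φ ≫ eqToHom _)) ≫
          (eqToHom _ ≫ (ιs F s j).map ψ ≫ eqToHom _)
      simp
      erw [eqToHom_trans_assoc]
      simp
    | map f φ h1 h2 h1' h2' =>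
      rename_i j k x y a b
      rw [Paths.lift_toPath, Paths.lift_toPath]
      show eqToHom _ ≫ (ιs F s j).map φ ≫ eqToHom _ =
        eqToHom _ ≫ (ιs F s k).map ((F.map f).toFunctor.map φ) ≫ eqToHom _
      rw [Functor.congr_hom (ιs_w F s f).symm φ]
      show eqToHom _ ≫ (eqToHom _ ≫ (ιs F s k).map ((F.map f).toFunctor.map φ) ≫ eqToHom _) ≫
        eqToHom _ = _
      simp)

lemma fac (j : J) : ι F j ⋙ desc F s = (ιs F s j) := by
  refine CategoryTheory.Functor.ext (fun x => rfl) ?_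
  intro x y φ
  show (desc F s).map (sng F j φ rfl rfl) = _
  have : (desc F s).map (sng F j φ rfl rfl) =
      (Paths.lift (descPre F s)).map (Quiver.Hom.toPath ⟨⟨j, x, y, φ⟩, rfl, rfl⟩) := rfl
  rw [this, Paths.lift_toPath]
  show eqToHom _ ≫ (ιs F s j).map φ ≫ eqToHom _ = _
  rfl

lemma uniq (m : C F ⥤ (s.pt : Type u)) (hm : ∀ j, ι F j ⋙ m = (ιs F s j)) :
    m = desc F s := by
  have hobj : ∀ a : C F, m.obj a = (desc F s).obj a := by
    rintro ⟨a⟩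
    induction a using Quot.ind with
    | _ p =>
      obtain ⟨j, x⟩ := p
      exact Functor.congr_obj (hm j) x
  -- single-arrow case
  have hsng : ∀ (j : J) (x y : F.obj j) (φ : x ⟶ y) (a b : Obj F)
      (h1 : mkObj F j x = a) (h2 : mkObj F j y = b),
      m.map (sng F j φ h1 h2) =
        eqToHom (hobj (mkC F a)) ≫ (desc F s).map (sng F j φ h1 h2) ≫
          eqToHom (hobj (mkC F b)).symm := by
    intro j x y φ a b h1 h2
    subst h1 h2
    have hd : (desc F s).map (sng F j φ rfl rfl) = (ιs F s j).map φ := by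
      have : (desc F s).map (sng F j φ rfl rfl) =
          (Paths.lift (descPre F s)).map (Quiver.Hom.toPath ⟨⟨j, x, y, φ⟩, rfl, rfl⟩) := rfl
      rw [this, Paths.lift_toPath]
      show 𝟙 _ ≫ (ιs F s j).map φ ≫ 𝟙 _ = _
      simp
    refine (conj_eqToHom_iff_heq _ _ (hobj _) (hobj _)).mpr ?_
    exact (Functor.hcongr_hom (hm j) φ).trans (heq_of_eq hd).symm
  have hpath : ∀ (a b : Obj F) (p : Quiver.Path (V := Obj F) a b),
      m.map (Quot.mk _ p : mkC F a ⟶ mkC F b) =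
        eqToHom (hobj (mkC F a)) ≫ (desc F s).map (Quot.mk _ p : mkC F a ⟶ mkC F b) ≫
          eqToHom (hobj (mkC F b)).symm := by
    intro a b p
    induction p with
    | nil =>
      show m.map (𝟙 (mkC F a)) = _ ≫ (desc F s).map (𝟙 (mkC F a)) ≫ _
      simp
    | @cons c d p e ih =>
      obtain ⟨⟨j, x, y, φ⟩, h1, h2⟩ := e
      have hsplit : (Quot.mk _ (p.cons ⟨⟨j, x, y, φ⟩, h1, h2⟩) : mkC F a ⟶ mkC F d) =
          (Quot.mk _ p : mkC F a ⟶ mkC F c) ≫ sng F j φ h1 h2 := by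
        apply congrArg (Quot.mk _)
        show p.cons _ = p.comp (Quiver.Hom.toPath ⟨⟨j, x, y, φ⟩, h1, h2⟩)
        rfl
      erw [hsplit, Functor.map_comp, Functor.map_comp, ih, hsng]
      simp
  refine CategoryTheory.Functor.ext hobj ?_
  intro a b f
  obtain ⟨a⟩ := a
  obtain ⟨b⟩ := b
  revert f
  refine Quot.ind ?_
  intro p
  exact hpath a b p

/-- The cocone is a colimit. -/
def isColimit : IsColimit (cocone F) where
  desc s := ⟨desc F s⟩
  fac s j := Cat.Hom.ext (fac F s j)
  uniq s m hm := Cat.Hom.ext (uniq F s m.toFunctor fun j => congrArg Cat.Hom.toFunctor (hm j))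

end CatColim2

instance Cat.hasColimits : Limits.HasColimits Cat.{u, u} where
  has_colimits_of_shape _ _ :=
    { has_colimit := fun F => Limits.HasColimit.mk ⟨CatColim2.cocone F, CatColim2.isColimit F⟩ }

namespace FRefl

variable (X : Arrow Cat.{u, u})

/-- The image category. -/
abbrev Im : Type u := ObjectProperty.FullSubcategory (fun b : (X.right : Type u) =>
  b ∈ Set.range (X.hom.toFunctor : ↥X.left ⥤ ↥X.right).obj)

/-- Inclusion of the image. -/
abbrev M : Im X ⥤ (X.right : Type u) := ObjectProperty.ι _

lemma M_injective : Function.Injective (M X).obj := by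
  rintro ⟨a, ha⟩ ⟨b, hb⟩ h
  cases h
  rfl

/-- Corestriction onto the image. -/
def E : (X.left : Type u) ⥤ Im X :=
  ObjectProperty.lift _ (X.hom.toFunctor : ↥X.left ⥤ ↥X.right) (fun a => ⟨a, rfl⟩)

lemma E_comp_M : E X ⋙ M X = (X.hom.toFunctor : ↥X.left ⥤ ↥X.right) :=
  rfl

/-- The reflection of `X`. -/
def RX : FCat.{u} :=
  ⟨Arrow.mk (show Cat.of (Im X) ⟶ X.right from ⟨M X⟩),
    ⟨inferInstanceAs (M X).Full, inferInstanceAs (M X).Faithful, M_injective X⟩⟩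

/-- The unit morphism `X ⟶ RX` in the arrow category. -/
def unit : X ⟶ (RX X).obj :=
  Arrow.homMk (u := show X.left ⟶ Cat.of (Im X) from ⟨E X⟩) (v := 𝟙 X.right)
    (by
      have h : X.hom ≫ 𝟙 X.right = X.hom := Category.comp_id _
      erw [h])

end FRefl

namespace FRefl
section
variable {X : Arrow Cat.{u, u}} (W : FCat.{u}) (g : X ⟶ W.obj)

/-- Object part of the induced functor out of the image. -/
noncomputable def wObj : Im X → (W.obj.left : Type u) := fun b => g.left.toFunctor.obj b.2.choose

lemma wObj_spec (b : Im X) :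
    (W.obj.hom.toFunctor : ↥W.obj.left ⥤ ↥W.obj.right).obj (wObj W g b) = g.right.toFunctor.obj b.1 := by
  have h1 : (X.hom.toFunctor : ↥X.left ⥤ ↥X.right).obj b.2.choose = b.1 := b.2.choose_spec
  have h2 := Functor.congr_obj (congrArg Cat.Hom.toFunctor (Arrow.w g)) b.2.choose
  rw [← h1]
  exact h2

/-- The induced functor out of the image. -/
noncomputable def wFun : Im X ⥤ (W.obj.left : Type u) :=
  letI : (W.obj.hom.toFunctor : ↥W.obj.left ⥤ ↥W.obj.right).Full := W.property.1
  letI : (W.obj.hom.toFunctor : ↥W.obj.left ⥤ ↥W.obj.right).Faithful := W.property.2.1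
  { obj := wObj W g
    map := fun {b c} f =>
      (W.obj.hom.toFunctor : ↥W.obj.left ⥤ ↥W.obj.right).preimage
        (eqToHom (wObj_spec W g b) ≫ g.right.toFunctor.map f.hom ≫ eqToHom (wObj_spec W g c).symm)
    map_id := fun b => (W.obj.hom.toFunctor : ↥W.obj.left ⥤ ↥W.obj.right).map_injective (by
      show (W.obj.hom.toFunctor : ↥W.obj.left ⥤ ↥W.obj.right).map
        ((W.obj.hom.toFunctor : ↥W.obj.left ⥤ ↥W.obj.right).preimage _) = _
      rw [Functor.map_preimage]
      show _ ≫ g.right.toFunctor.map (𝟙 b.1) ≫ _ = _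
      simp)
    map_comp := fun {b c d} f f' => (W.obj.hom.toFunctor : ↥W.obj.left ⥤ ↥W.obj.right).map_injective (by
      simp only [Functor.map_preimage, Functor.map_comp]
      show eqToHom _ ≫ g.right.toFunctor.map (f.hom ≫ f'.hom) ≫ eqToHom _ = _
      rw [Functor.map_comp]
      simp) }

lemma wFun_comp_G :
    wFun W g ⋙ (W.obj.hom.toFunctor : ↥W.obj.left ⥤ ↥W.obj.right) = M X ⋙ g.right.toFunctor := by
  letI : (W.obj.hom.toFunctor : ↥W.obj.left ⥤ ↥W.obj.right).Full := W.property.1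
  refine CategoryTheory.Functor.ext (fun b => wObj_spec W g b) ?_
  intro b c f
  show (W.obj.hom.toFunctor : ↥W.obj.left ⥤ ↥W.obj.right).map
    ((W.obj.hom.toFunctor : ↥W.obj.left ⥤ ↥W.obj.right).preimage _) = _
  erw [Functor.map_preimage]
  show eqToHom _ ≫ g.right.toFunctor.map f.hom ≫ eqToHom _ = eqToHom _ ≫ g.right.toFunctor.map f.hom ≫ eqToHom _
  simp

lemma E_comp_wFun : E X ⋙ wFun W g = g.left.toFunctor := by
  letI : (W.obj.hom.toFunctor : ↥W.obj.left ⥤ ↥W.obj.right).Full := W.property.1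
  letI : (W.obj.hom.toFunctor : ↥W.obj.left ⥤ ↥W.obj.right).Faithful := W.property.2.1
  have hobj : ∀ a : (X.left : Type u), (E X ⋙ wFun W g).obj a = g.left.toFunctor.obj a := by
    intro a
    apply W.property.2.2
    have h1 := wObj_spec W g ((E X).obj a)
    have h2 := Functor.congr_obj (congrArg Cat.Hom.toFunctor (Arrow.w g)) a
    exact h1.trans h2.symm
  refine CategoryTheory.Functor.ext hobj ?_
  intro a a' φ
  apply (W.obj.hom.toFunctor : ↥W.obj.left ⥤ ↥W.obj.right).map_injective
  show (W.obj.hom.toFunctor : ↥W.obj.left ⥤ ↥W.obj.right).map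
    ((W.obj.hom.toFunctor : ↥W.obj.left ⥤ ↥W.obj.right).preimage _) = _
  erw [Functor.map_preimage]
  have key := Functor.congr_hom (congrArg Cat.Hom.toFunctor (Arrow.w g)) φ
  rw [Functor.map_comp, Functor.map_comp,
    show (W.obj.hom.toFunctor : ↥W.obj.left ⥤ ↥W.obj.right).map (g.left.toFunctor.map φ) =
      (g.left ≫ W.obj.hom).toFunctor.map φ from rfl, key]
  show eqToHom _ ≫ g.right.toFunctor.map ((X.hom.toFunctor : ↥X.left ⥤ ↥X.right).map φ) ≫ eqToHom _ =
    (W.obj.hom.toFunctor : ↥W.obj.left ⥤ ↥W.obj.right).map (eqToHom _) ≫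
      (eqToHom _ ≫ g.right.toFunctor.map ((X.hom.toFunctor : ↥X.left ⥤ ↥X.right).map φ) ≫ eqToHom _) ≫
      (W.obj.hom.toFunctor : ↥W.obj.left ⥤ ↥W.obj.right).map (eqToHom _)
  erw [eqToHom_map]
  erw [eqToHom_map]
  apply eq_of_heq
  exact ((eqToHom_comp_heq _ _).trans (comp_eqToHom_heq _ _)).trans
    ((((eqToHom_comp_heq _ _).trans (comp_eqToHom_heq _ _)).trans
      (eqToHom_comp_heq _ _)).trans (comp_eqToHom_heq _ _)).symm

/-- The induced morphism `RX ⟶ W` in `FCat`. -/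
noncomputable def toW : RX X ⟶ W :=
  ObjectProperty.homMk (Arrow.homMk (u := show (RX X).obj.left ⟶ W.obj.left from ⟨wFun W g⟩)
    (v := show (RX X).obj.right ⟶ W.obj.right from g.right) (Cat.Hom.ext (wFun_comp_G W g)))

end
end FRefl

namespace FRefl
section
variable {X : Arrow Cat.{u, u}}

lemma toW_unique (W : FCat.{u}) (g : X ⟶ W.obj) (m : RX X ⟶ W)
    (hm : unit X ≫ (ObjectProperty.ι IsFullEmbedding.{u}).map m = g) : m = toW W g := by
  letI : (W.obj.hom.toFunctor : ↥W.obj.left ⥤ ↥W.obj.right).Full := W.property.1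
  letI : (W.obj.hom.toFunctor : ↥W.obj.left ⥤ ↥W.obj.right).Faithful := W.property.2.1
  have hr : m.hom.right = g.right := by
    have h : 𝟙 X.right ≫ m.hom.right = g.right := congrArg CommaMorphism.right hm
    erw [Category.id_comp] at h
    exact h
  obtain ⟨⟨ml, mr, mw⟩⟩ := m
  dsimp only at hr
  subst hr
  have hGm : ml ≫ W.obj.hom = (RX X).obj.hom ≫ g.right :=
    Arrow.w (f := (RX X).obj) (g := W.obj) ⟨ml, g.right, mw⟩
  have hleft : ml.toFunctor = wFun W g := by
    have hobj : ∀ b : Im X, ml.toFunctor.obj b = (wFun W g).obj b := by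
      intro b
      apply W.property.2.2
      have h1 := Functor.congr_obj (congrArg Cat.Hom.toFunctor hGm) b
      have h2 := wObj_spec W g b
      show (ml ≫ W.obj.hom).toFunctor.obj b = _
      rw [h1]
      show g.right.toFunctor.obj b.1 = (W.obj.hom.toFunctor : ↥W.obj.left ⥤ ↥W.obj.right).obj ((wFun W g).obj b)
      rw [← h2]
      rfl
    refine CategoryTheory.Functor.ext hobj ?_
    intro b c f
    apply (W.obj.hom.toFunctor : ↥W.obj.left ⥤ ↥W.obj.right).map_injective
    have key := Functor.congr_hom (congrArg Cat.Hom.toFunctor hGm) f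
    rw [Functor.map_comp, Functor.map_comp,
      show (W.obj.hom.toFunctor : ↥W.obj.left ⥤ ↥W.obj.right).map (ml.toFunctor.map f) =
        (ml ≫ W.obj.hom).toFunctor.map f from rfl, key]
    show eqToHom _ ≫ g.right.toFunctor.map f.hom ≫ eqToHom _ =
      (W.obj.hom.toFunctor : ↥W.obj.left ⥤ ↥W.obj.right).map (eqToHom _) ≫
        (W.obj.hom.toFunctor : ↥W.obj.left ⥤ ↥W.obj.right).map ((wFun W g).map f) ≫
        (W.obj.hom.toFunctor : ↥W.obj.left ⥤ ↥W.obj.right).map (eqToHom _)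
    rw [show (W.obj.hom.toFunctor : ↥W.obj.left ⥤ ↥W.obj.right).map ((wFun W g).map f) =
      (W.obj.hom.toFunctor : ↥W.obj.left ⥤ ↥W.obj.right).map
        ((W.obj.hom.toFunctor : ↥W.obj.left ⥤ ↥W.obj.right).preimage
          (eqToHom (wObj_spec W g b) ≫ g.right.toFunctor.map f.hom ≫ eqToHom (wObj_spec W g c).symm))
      from rfl, Functor.map_preimage]
    simp [eqToHom_map]
    apply eq_of_heq
    exact ((eqToHom_comp_heq _ _).trans (comp_eqToHom_heq _ _)).trans
      ((((eqToHom_comp_heq _ _).trans (comp_eqToHom_heq _ _)).trans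
        (eqToHom_comp_heq _ _)).trans (comp_eqToHom_heq _ _)).symm
  apply InducedCategory.hom_ext
  apply CommaMorphism.ext
  · exact Cat.Hom.ext hleft
  · rfl

/-- The canonical map out of the unit, in the structured arrow category. -/
noncomputable def initialHom (Z : StructuredArrow X (ObjectProperty.ι IsFullEmbedding.{u})) :
    StructuredArrow.mk (Y := RX X) (T := ObjectProperty.ι IsFullEmbedding.{u}) (unit X) ⟶ Z :=
  StructuredArrow.homMk (toW Z.right Z.hom) (by
    apply CommaMorphism.ext
    · exact Cat.Hom.ext (E_comp_wFun Z.right Z.hom)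
    · show 𝟙 X.right ≫ Z.hom.right = Z.hom.right
      exact Category.id_comp _)

lemma initialHom_unique (Z : StructuredArrow X (ObjectProperty.ι IsFullEmbedding.{u}))
    (k : StructuredArrow.mk (Y := RX X) (T := ObjectProperty.ι IsFullEmbedding.{u}) (unit X) ⟶ Z) : k = initialHom Z := by
  have : k.right = toW Z.right Z.hom := toW_unique Z.right Z.hom k.right (StructuredArrow.w k)
  apply StructuredArrow.ext
  · rw [this]
    rfl

end
end FRefl

instance (X : Arrow Cat.{u, u}) :
    Limits.HasInitial (StructuredArrow X (ObjectProperty.ι IsFullEmbedding.{u})) := by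
  letI : ∀ Z : StructuredArrow X (ObjectProperty.ι IsFullEmbedding.{u}),
      Nonempty (StructuredArrow.mk (Y := FRefl.RX X) (T := ObjectProperty.ι IsFullEmbedding.{u}) (FRefl.unit X) ⟶ Z) := fun Z => ⟨FRefl.initialHom Z⟩
  letI : ∀ Z : StructuredArrow X (ObjectProperty.ι IsFullEmbedding.{u}),
      Subsingleton (StructuredArrow.mk (Y := FRefl.RX X) (T := ObjectProperty.ι IsFullEmbedding.{u}) (FRefl.unit X) ⟶ Z) := fun Z =>
    ⟨fun k k' => (FRefl.initialHom_unique Z k).trans (FRefl.initialHom_unique Z k').symm⟩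
  exact Limits.hasInitial_of_unique (StructuredArrow.mk (Y := FRefl.RX X) (T := ObjectProperty.ι IsFullEmbedding.{u}) (FRefl.unit X))

/-- The full embeddings form a reflective subcategory of the arrow category. -/
noncomputable def FCat.reflective : Reflective (ObjectProperty.ι IsFullEmbedding.{u}) where
  L := leftAdjointOfStructuredArrowInitials _
  adj := adjunctionOfStructuredArrowInitials _

/-- The full subcategory `F` of `Cat²` determined by the full embeddings
(functors injective on objects and fully faithful) is reflective in `Cat²`, and is
complete and cocomplete. -/
theorem FCat_reflective_complete_cocomplete :
    Nonempty (Reflective (ObjectProperty.ι IsFullEmbedding.{u})) ∧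
      Limits.HasLimits FCat.{u} ∧ Limits.HasColimits FCat.{u} := by
  refine ⟨⟨FCat.reflective⟩, ?_, ?_⟩
  · letI := FCat.reflective.{u}
    exact hasLimits_of_reflective (ObjectProperty.ι IsFullEmbedding.{u})
  · letI := FCat.reflective.{u}
    exact hasColimits_of_reflective (ObjectProperty.ι IsFullEmbedding.{u})
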